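/- Let X = ℓ^p (1 ≤ p ≤ ∞), S the left-shift operator (Sx)_k = x_{k+1}, and T = (1/4)(I+S)². Then ‖T‖ = 1 and the spectrum of T equals {r e^{iθ} : −π < θ ≤ π, 0 ≤ r ≤ (1+cos θ)/2}; in particular σ(T) ∩ 𝕋 = {1}. -/

import Mathlib

open Complex Metric

-- helper: norm bound for the shift
lemma shift_norm_le (p : ENNReal) [Fact (1 ≤ p)]
    (S : lp (fun _ : ℕ => ℂ) p →L[ℂ] lp (fun _ : ℕ => ℂ) p)
    (hS : ∀ x : lp (fun _ : ℕ => ℂ) p, ∀ k : ℕ, (S x : ℕ → ℂ) k = x (k + 1)) :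
    ‖S‖ ≤ 1 := by
  have hp0 : p ≠ 0 := by
    have := Fact.out (p := 1 ≤ p); intro h; rw [h] at this; simp at this
  refine S.opNorm_le_bound zero_le_one (fun x => ?_)
  rw [one_mul]
  rcases p.trichotomy with (rfl | rfl | hp)
  · exact absurd rfl hp0
  · refine lp.norm_le_of_forall_le (lp.norm_nonneg' x) (fun k => ?_)
    rw [hS x k]
    exact lp.norm_apply_le_norm (by norm_num) x (k + 1)
  · refine lp.norm_le_of_tsum_le hp (lp.norm_nonneg' x) ?_
    rw [lp.norm_rpow_eq_tsum hp x]
    have hsum : Summable (fun k : ℕ => ‖x k‖ ^ p.toReal) := (lp.memℓp x).summable hp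
    have heq : (fun k : ℕ => ‖(S x : ℕ → ℂ) k‖ ^ p.toReal)
        = (fun k : ℕ => ‖x k‖ ^ p.toReal) ∘ (fun k : ℕ => k + 1) := by
      funext k; simp [hS x k]
    rw [show (∑' k : ℕ, ‖(S x : ℕ → ℂ) k‖ ^ p.toReal)
        = tsum ((fun k : ℕ => ‖x k‖ ^ p.toReal) ∘ (fun k : ℕ => k + 1)) from by rw [heq]]
    exact tsum_comp_le_tsum_of_inj hsum (fun a => Real.rpow_nonneg (norm_nonneg _) _)
      (add_left_injective 1)

lemma spec_shift (p : ENNReal) [Fact (1 ≤ p)]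
    (S : lp (fun _ : ℕ => ℂ) p →L[ℂ] lp (fun _ : ℕ => ℂ) p)
    (hS : ∀ x : lp (fun _ : ℕ => ℂ) p, ∀ k : ℕ, (S x : ℕ → ℂ) k = x (k + 1)) :
    spectrum ℂ S = closedBall (0 : ℂ) 1 := by
  have hp0 : p ≠ 0 := by
    have := Fact.out (p := 1 ≤ p); intro h; rw [h] at this; simp at this
  -- eigenvectors
  have hmem : ∀ lam : ℂ, ‖lam‖ < 1 → Memℓp (fun k : ℕ => lam ^ k) p := by
    intro lam hlam
    rcases p.trichotomy with (rfl | rfl | hp)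
    · exact absurd rfl hp0
    · refine memℓp_infty ⟨1, ?_⟩
      rintro - ⟨k, rfl⟩
      simpa [norm_pow] using pow_le_one₀ (norm_nonneg lam) hlam.le
    · refine memℓp_gen ?_
      have key : ∀ k : ℕ, ‖lam ^ k‖ ^ p.toReal = (‖lam‖ ^ p.toReal) ^ k := by
        intro k
        rw [norm_pow, ← Real.rpow_natCast ‖lam‖ k, ← Real.rpow_mul (norm_nonneg _),
          mul_comm, Real.rpow_mul (norm_nonneg _), Real.rpow_natCast]
      simp_rw [key]
      exact summable_geometric_of_lt_one (Real.rpow_nonneg (norm_nonneg _) _)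
        (Real.rpow_lt_one (norm_nonneg _) hlam hp)
  have hsub : Metric.ball (0 : ℂ) 1 ⊆ spectrum ℂ S := by
    intro lam hlam
    rw [mem_ball_zero_iff] at hlam
    set v : lp (fun _ : ℕ => ℂ) p := ⟨fun k => lam ^ k, hmem lam hlam⟩ with hv
    have hv0 : (v : ℕ → ℂ) 0 = 1 := by simp [hv]
    have hvne : v ≠ 0 := by
      intro h
      rw [h] at hv0
      simp [lp.coeFn_zero] at hv0
    have hAv : (algebraMap ℂ _ lam - S) v = 0 := by
      refine lp.ext ?_
      funext k
      have h1 : ((algebraMap ℂ (lp (fun _ : ℕ => ℂ) p →L[ℂ] lp (fun _ : ℕ => ℂ) p) lam - S) v : ℕ → ℂ) k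
          = lam • (v : ℕ → ℂ) k - (S v : ℕ → ℂ) k := by
        rw [ContinuousLinearMap.sub_apply, lp.coeFn_sub, Pi.sub_apply,
          Algebra.algebraMap_eq_smul_one, ContinuousLinearMap.smul_apply,
          ContinuousLinearMap.one_apply, lp.coeFn_smul, Pi.smul_apply]
      rw [h1, hS v k]
      show lam • lam ^ k - lam ^ (k + 1) = 0
      rw [smul_eq_mul, pow_succ, mul_comm, sub_self]
    rw [spectrum.mem_iff]
    rintro ⟨u, hu⟩
    apply hvne
    have h2 : ((↑u⁻¹ * ↑u : lp (fun _ : ℕ => ℂ) p →L[ℂ] lp (fun _ : ℕ => ℂ) p)) v = v := by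
      rw [u.inv_mul]; rfl
    rw [← h2, ContinuousLinearMap.mul_apply, hu, hAv, map_zero]
  haveI : Nontrivial (lp (fun _ : ℕ => ℂ) p) := by
    refine ⟨⟨fun k => (0 : ℂ) ^ k, hmem 0 (by norm_num)⟩, 0, ?_⟩
    intro h
    have := congrFun (congrArg (fun x : lp (fun _ : ℕ => ℂ) p => (x : ℕ → ℂ)) h) 0
    simp [lp.coeFn_zero] at this
  apply Set.Subset.antisymm
  · intro lam hlam
    have := spectrum.subset_closedBall_norm (𝕜 := ℂ) S hlam
    exact closedBall_subset_closedBall (shift_norm_le p S hS) this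
  · rw [← closure_ball (0 : ℂ) one_ne_zero]
    exact (spectrum.isClosed (𝕜 := ℂ) S).closure_subset_iff.2 hsub

lemma image_cardioid :
    (fun z : ℂ => (4 : ℂ)⁻¹ * (1 + z) ^ 2) '' closedBall (0 : ℂ) 1 =
      {z : ℂ | ∃ r θ : ℝ, -Real.pi < θ ∧ θ ≤ Real.pi ∧ 0 ≤ r ∧
        r ≤ (1 + Real.cos θ) / 2 ∧ z = r * Complex.exp (θ * Complex.I)} := by
  ext w
  constructor
  · rintro ⟨z, hz, rfl⟩
    rw [mem_closedBall_zero_iff] at hz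
    set u : ℂ := (1 + z) / 2 with hu
    have hval : (4 : ℂ)⁻¹ * (1 + z) ^ 2 = u ^ 2 := by
      rw [hu]; ring
    have hre : Complex.normSq u ≤ u.re := by
      have h1 : Complex.normSq z ≤ 1 := by
        have hz' : ‖z‖ ≤ 1 := hz
        rw [← Complex.sq_norm]
        nlinarith [norm_nonneg z]
      have hz2 : z = 2 * u - 1 := by rw [hu]; ring
      rw [hz2] at h1
      simp only [Complex.normSq_apply, Complex.sub_re, Complex.mul_re, Complex.sub_im,
        Complex.mul_im, Complex.re_ofNat, Complex.im_ofNat, Complex.one_re, Complex.one_im] at h1 ⊢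
      nlinarith
    rcases eq_or_ne u 0 with h0 | h0
    · refine ⟨0, Real.pi, by linarith [Real.pi_pos], le_refl _, le_refl _, ?_, ?_⟩
      · simp [Real.cos_pi]
      · dsimp only; rw [hval, h0]; simp
    · have habs : ‖u‖ ≤ Real.cos u.arg := by
        have h1 : ‖u‖ * ‖u‖ ≤ ‖u‖ * Real.cos u.arg := by
          rw [Complex.cos_arg h0]
          rw [← Complex.sq_norm] at hre
          have h2 : (0:ℝ) < ‖u‖ := norm_pos_iff.mpr h0
          calc ‖u‖ * ‖u‖ = ‖u‖ ^ 2 := (sq _).symm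
            _ ≤ u.re := hre
            _ = ‖u‖ * (u.re / ‖u‖) := by field_simp
        exact le_of_mul_le_mul_left h1 (norm_pos_iff.mpr h0)
      have hcpos : 0 < Real.cos u.arg := lt_of_lt_of_le (norm_pos_iff.mpr h0) habs
      have harg : -(Real.pi / 2) < u.arg ∧ u.arg < Real.pi / 2 := by
        constructor
        · by_contra h
          push_neg at h
          have : Real.cos u.arg ≤ 0 := by
            rw [← Real.cos_neg]
            apply Real.cos_nonpos_of_pi_div_two_le_of_le (by linarith)
            have := Complex.neg_pi_lt_arg u
            linarith [Real.pi_pos]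
          linarith
        · by_contra h
          push_neg at h
          have : Real.cos u.arg ≤ 0 := by
            apply Real.cos_nonpos_of_pi_div_two_le_of_le h
            have := Complex.arg_le_pi u
            linarith [Real.pi_pos]
          linarith
      refine ⟨‖u‖ ^ 2, 2 * u.arg, by linarith [harg.1], by linarith [harg.2],
        sq_nonneg _, ?_, ?_⟩
      · have : Real.cos u.arg ^ 2 = (1 + Real.cos (2 * u.arg)) / 2 := by
          rw [Real.cos_sq]; ring
        nlinarith [norm_nonneg u]
      · dsimp only
        rw [hval]
        conv_lhs => rw [← Complex.norm_mul_exp_arg_mul_I u]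
        rw [mul_pow, ← Complex.exp_nat_mul]
        push_cast
        ring_nf
  · rintro ⟨r, θ, h1, h2, h3, h4, rfl⟩
    set s := Real.sqrt r with hs
    set c := Real.cos (θ / 2) with hc
    have hc0 : 0 ≤ c := by
      apply Real.cos_nonneg_of_mem_Icc
      constructor <;> [linarith; linarith]
    have hcsq : c ^ 2 = (1 + Real.cos θ) / 2 := by
      rw [hc, Real.cos_sq]
      rw [show 2 * (θ / 2) = θ by ring]
      ring
    have hsc : s ≤ c := by
      rw [hs]
      calc Real.sqrt r ≤ Real.sqrt (c ^ 2) := Real.sqrt_le_sqrt (by rw [hcsq]; exact h4)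
        _ = c := by rw [Real.sqrt_sq hc0]
    have hs0 : 0 ≤ s := Real.sqrt_nonneg r
    set u : ℂ := (s : ℂ) * Complex.exp ((θ / 2 : ℝ) * Complex.I) with hu
    refine ⟨2 * u - 1, ?_, ?_⟩
    · rw [mem_closedBall_zero_iff, Complex.norm_def]
      have h5 : Complex.normSq (2 * u - 1) ≤ 1 := by
        have hure : u.re = s * c := by
          have he := Complex.exp_ofReal_mul_I_re (θ / 2)
          rw [hu, Complex.mul_re, Complex.ofReal_re, Complex.ofReal_im, he, hc]
          ring
        have husq : Complex.normSq u = s ^ 2 := by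
          rw [hu, Complex.normSq_mul, ← Complex.sq_norm (Complex.exp _),
            Complex.norm_exp_ofReal_mul_I]
          simp [Complex.normSq_ofReal]; ring
        have : Complex.normSq (2 * u - 1) = 4 * Complex.normSq u - 4 * u.re + 1 := by
          simp only [Complex.normSq_apply, Complex.sub_re, Complex.mul_re, Complex.sub_im,
            Complex.mul_im, Complex.re_ofNat, Complex.im_ofNat, Complex.one_re, Complex.one_im]
          ring
        rw [this, husq, hure]
        nlinarith
      have := Real.sqrt_le_sqrt h5
      simpa using this
    · dsimp only
      have : (1 : ℂ) + (2 * u - 1) = 2 * u := by ring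
      rw [this]
      have : (4 : ℂ)⁻¹ * (2 * u) ^ 2 = u ^ 2 := by ring
      rw [this, hu, mul_pow, ← Complex.exp_nat_mul]
      have hsr : (s : ℂ) ^ 2 = (r : ℂ) := by
        rw [← Complex.ofReal_pow, hs, Real.sq_sqrt h3]
      rw [hsr]
      congr 1
      push_cast
      ring

lemma inter_circle :
    {z : ℂ | ∃ r θ : ℝ, -Real.pi < θ ∧ θ ≤ Real.pi ∧ 0 ≤ r ∧
        r ≤ (1 + Real.cos θ) / 2 ∧ z = r * Complex.exp (θ * Complex.I)} ∩ {z : ℂ | ‖z‖ = 1}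
      = {1} := by
  ext z
  simp only [Set.mem_inter_iff, Set.mem_setOf_eq, Set.mem_singleton_iff]
  constructor
  · rintro ⟨⟨r, θ, h1, h2, h3, h4, rfl⟩, hnorm⟩
    have habs : ‖(r : ℂ) * Complex.exp (θ * Complex.I)‖ = r := by
      rw [norm_mul, Complex.norm_real,
        Complex.norm_exp_ofReal_mul_I, mul_one, Real.norm_of_nonneg h3]
    rw [habs] at hnorm
    subst hnorm
    have hcos : Real.cos θ = 1 := by
      have := Real.cos_le_one θ
      linarith
    have hθ : θ = 0 := by
      have hpi := Real.pi_pos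
      exact (Real.cos_eq_one_iff_of_lt_of_lt (by linarith) (by linarith)).1 hcos
    subst hθ
    simp
  · rintro rfl
    refine ⟨⟨1, 0, by linarith [Real.pi_pos], Real.pi_pos.le, zero_le_one, by norm_num, by simp⟩, by simp⟩

/-- For the left shift `S` on `ℓ^p` (`1 ≤ p ≤ ∞`) and `T = (1/4)(I+S)²`, one has `‖T‖ = 1`,
`σ(T) = {r e^{iθ} : −π < θ ≤ π, 0 ≤ r ≤ (1+cos θ)/2}` and `σ(T) ∩ 𝕋 = {1}`. -/
theorem stmt_15 (p : ENNReal) [Fact (1 ≤ p)]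
    (S : lp (fun _ : ℕ => ℂ) p →L[ℂ] lp (fun _ : ℕ => ℂ) p)
    (hS : ∀ x : lp (fun _ : ℕ => ℂ) p, ∀ k : ℕ, (S x : ℕ → ℂ) k = x (k + 1)) :
    ‖(4 : ℂ)⁻¹ • (1 + S) ^ 2‖ = 1 ∧
      spectrum ℂ ((4 : ℂ)⁻¹ • (1 + S) ^ 2) =
        {z : ℂ | ∃ r θ : ℝ, -Real.pi < θ ∧ θ ≤ Real.pi ∧ 0 ≤ r ∧
          r ≤ (1 + Real.cos θ) / 2 ∧ z = r * Complex.exp (θ * Complex.I)} ∧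
      spectrum ℂ ((4 : ℂ)⁻¹ • (1 + S) ^ 2) ∩ {z : ℂ | ‖z‖ = 1} = {1} := by
  haveI : Nontrivial (lp (fun _ : ℕ => ℂ) p) := by
    refine ⟨lp.single p 0 (1 : ℂ), 0, fun h => ?_⟩
    have h0 : (lp.single p 0 (1 : ℂ) : ℕ → ℂ) 0 = (1 : ℂ) := lp.single_apply_self p 0 1
    rw [h] at h0
    simp [lp.coeFn_zero] at h0
  set T := (4 : ℂ)⁻¹ • (1 + S) ^ 2 with hTdef
  have hT : T = Polynomial.aeval S (Polynomial.C (4 : ℂ)⁻¹ * (1 + Polynomial.X) ^ 2) := by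
    rw [hTdef, map_mul, map_pow, map_add, Polynomial.aeval_C, Polynomial.aeval_X, map_one,
      ← Algebra.smul_def]
  have hspec : spectrum ℂ T =
      {z : ℂ | ∃ r θ : ℝ, -Real.pi < θ ∧ θ ≤ Real.pi ∧ 0 ≤ r ∧
          r ≤ (1 + Real.cos θ) / 2 ∧ z = r * Complex.exp (θ * Complex.I)} := by
    rw [hT, spectrum.map_polynomial_aeval, spec_shift p S hS, ← image_cardioid]
    apply congrArg (· '' _)
    funext z
    simp [Polynomial.eval_mul, Polynomial.eval_pow]
  refine ⟨?_, hspec, by rw [hspec, inter_circle]⟩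
  have hle : ‖T‖ ≤ 1 := by
    rw [hTdef]
    have h1 : ‖1 + S‖ ≤ 2 := by
      calc ‖1 + S‖ ≤ ‖(1 : lp (fun _ : ℕ => ℂ) p →L[ℂ] lp (fun _ : ℕ => ℂ) p)‖ + ‖S‖ :=
            norm_add_le _ _
        _ ≤ 1 + 1 := add_le_add (ContinuousLinearMap.norm_id_le) (shift_norm_le p S hS)
        _ = 2 := by norm_num
    calc ‖(4 : ℂ)⁻¹ • (1 + S) ^ 2‖ ≤ ‖(4 : ℂ)⁻¹‖ * ‖(1 + S) ^ 2‖ := norm_smul_le _ _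
      _ ≤ ‖(4 : ℂ)⁻¹‖ * (‖1 + S‖ * ‖1 + S‖) := by
          rw [sq]; gcongr; exact norm_mul_le _ _
      _ ≤ ‖(4 : ℂ)⁻¹‖ * (2 * 2) := by
          refine mul_le_mul_of_nonneg_left ?_ (norm_nonneg _)
          nlinarith [norm_nonneg (1 + S)]
      _ = 1 := by
          rw [norm_inv]
          norm_num
  have h1mem : (1 : ℂ) ∈ spectrum ℂ T := by
    rw [hspec]
    exact ⟨1, 0, by linarith [Real.pi_pos], Real.pi_pos.le, zero_le_one, by norm_num, by simp⟩
  have hge : (1 : ℝ) ≤ ‖T‖ := by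
    simpa using spectrum.norm_le_norm_of_mem h1mem
  linarith
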